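/- Fix an integer p ≥ 3, let λ = 2cos(π/p), and let U(x) = λ − 1/x (the linear fractional transformation of the matrix U = [[λ,−1],[1,0]]). Then for every k with 2 ≤ k ≤ p one has U^k(0) = sin(kπ/p)/sin((k−1)π/p); in particular U^p(0) = 0 and U^2(0) = λ, and these values are strictly ordered: 0 = U^p(0) < U^{p−1}(0) < ⋯ < U^3(0) < U^2(0) = λ. -/

import Mathlib

open Real Matrix Filter

noncomputable section

/-- `λ_p = 2 cos (π / p)`, the minimal translation length of the Hecke group `G_p`. -/
def heckeLambda (p : ℕ) : ℝ := 2 * Real.cos (Real.pi / p)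

/-- The matrix `S = [[1, λ], [0, 1]]`. -/
def Smat (l : ℝ) : Matrix (Fin 2) (Fin 2) ℝ := !![1, l; 0, 1]

/-- The matrix `T = [[0, -1], [1, 0]]`. -/
def Tmat : Matrix (Fin 2) (Fin 2) ℝ := !![0, -1; 1, 0]

/-- The matrix `U = S * T = [[λ, -1], [1, 0]]`. -/
def Umat (l : ℝ) : Matrix (Fin 2) (Fin 2) ℝ := !![l, -1; 1, 0]

/-- The matrix `S^r = [[1, rλ], [0, 1]]` for an integer exponent `r`. -/
def SmatZ (l : ℝ) (r : ℤ) : Matrix (Fin 2) (Fin 2) ℝ := !![1, (r : ℝ) * l; 0, 1]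

/-- Möbius (linear fractional) action of a `2 × 2` real matrix on a real number. -/
def mobius (M : Matrix (Fin 2) (Fin 2) ℝ) (x : ℝ) : ℝ :=
  (M 0 0 * x + M 0 1) / (M 1 0 * x + M 1 1)

/-- `U^k(0)`, the image of `0` under `k` iterations of the linear fractional
transformation `U : x ↦ λ - 1/x`; as a ratio of entries of the matrix power `U^k`. -/
def Uorbit (l : ℝ) (k : ℕ) : ℝ := ((Umat l) ^ k) 0 1 / ((Umat l) ^ k) 1 1

/-- The complete quotients `α_j` of the (negative) `λ`-continued fraction algorithm:
`α_0 = α`, `α_{j+1} = 1 / (r_j λ - α_j)` with `r_j = ⌊α_j / λ⌋ + 1`. -/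
def cq (l α : ℝ) : ℕ → ℝ
  | 0 => α
  | j + 1 => 1 / (((⌊cq l α j / l⌋ : ℝ) + 1) * l - cq l α j)

/-- The partial quotients `r_j = ⌊α_j / λ⌋ + 1` of the `λ`-continued fraction of `α`. -/
def pq (l α : ℝ) (j : ℕ) : ℤ := ⌊cq l α j / l⌋ + 1

/-- `S` as an element of `SL(2, ℝ)`. -/
def Sgen (l : ℝ) : Matrix.SpecialLinearGroup (Fin 2) ℝ :=
  ⟨!![1, l; 0, 1], by norm_num [Matrix.det_fin_two_of]⟩

/-- `T` as an element of `SL(2, ℝ)`. -/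
def Tgen : Matrix.SpecialLinearGroup (Fin 2) ℝ :=
  ⟨!![0, -1; 1, 0], by norm_num [Matrix.det_fin_two_of]⟩

/-- The Hecke group `G_p`, the subgroup of `SL(2, ℝ)` generated by `S` and `T`. -/
def heckeGroup (l : ℝ) : Subgroup (Matrix.SpecialLinearGroup (Fin 2) ℝ) :=
  Subgroup.closure {Sgen l, Tgen}

/-- `M = [[a, b], [c, d]]` fixes `α` as a linear fractional transformation, i.e.
`α` is a root of `c x² + (d - a) x - b = 0`. -/
def fixesQuad (M : Matrix.SpecialLinearGroup (Fin 2) ℝ) (α : ℝ) : Prop :=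
  M.1 1 0 * α ^ 2 + (M.1 1 1 - M.1 0 0) * α - M.1 0 1 = 0

/-- `α` is a hyperbolic fixed point of the Hecke group `G(λ)`. -/
def IsHypFixedPt (l α : ℝ) : Prop :=
  ∃ M ∈ heckeGroup l, 2 < |M.1 0 0 + M.1 1 1| ∧ fixesQuad M α

/-- `α` is a hyperbolic fixed point of `G(λ)` with Hecke conjugate `α'`
(the other root of the fixed-point quadratic). -/
def IsHypPair (l α α' : ℝ) : Prop :=
  ∃ M ∈ heckeGroup l, 2 < |M.1 0 0 + M.1 1 1| ∧ fixesQuad M α ∧ fixesQuad M α' ∧ α' ≠ α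

/-- A hyperbolic fixed point is `G_p`-reduced when its complete-quotient sequence is
purely periodic. -/
def GpReduced (l β : ℝ) : Prop :=
  IsHypFixedPt l β ∧ ∃ m, 1 ≤ m ∧ cq l β m = β

/-- The map `Φ_p : [0, ∞) → [0, ∞)`: `Φ_p(x) = T U^i (x)` when
`U^{p-i+1}(0) ≤ x < U^{p-i}(0)` for the (unique) `i` with `1 ≤ i ≤ p - 2`,
and `Φ_p(x) = x - λ` when `x ≥ λ`. -/
def Phi (p : ℕ) (l : ℝ) (x : ℝ) : ℝ :=
  @dite ℝ (∃ i : ℕ, 1 ≤ i ∧ i ≤ p - 2 ∧ Uorbit l (p - i + 1) ≤ x ∧ x < Uorbit l (p - i))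
    (Classical.propDecidable _)
    (fun h => mobius (Tmat * (Umat l) ^ h.choose) x)
    (fun _ => x - l)

/-- `C_{n-j, n}`: the partial convergents computed by downward recursion,
`C_{n,n} = r_n λ` and `C_{m,n} = r_m λ - 1 / C_{m+1,n}`. -/
def convAux (l α : ℝ) (n : ℕ) : ℕ → ℝ
  | 0 => (pq l α n : ℝ) * l
  | j + 1 => (pq l α (n - (j + 1)) : ℝ) * l - 1 / convAux l α n j

/-- The `n`-th convergent `C_n = C_{0,n}` of the `λ`-continued fraction of `α`. -/
def conv (l α : ℝ) (n : ℕ) : ℝ := convAux l α n n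

/-- The word `S^{r_0} T S^{r_1} T ⋯ S^{r_n} T`. -/
def cfWord (l : ℝ) (r : ℕ → ℤ) (n : ℕ) : Matrix (Fin 2) (Fin 2) ℝ :=
  ((List.range (n + 1)).map fun j => SmatZ l (r j) * Tmat).prod


lemma sin_rec (c x t : ℝ) (h : c = 2 * Real.cos t) :
    Real.sin (x + t) = c * Real.sin x - Real.sin (x - t) := by
  rw [h, Real.sin_add, Real.sin_sub]; ring

lemma Umat_pow (l t : ℝ) (hl : l = 2 * Real.cos t) (hs : Real.sin t ≠ 0) (k : ℕ) :
    (Umat l) ^ k = !![Real.sin (((k : ℝ) + 1) * t) / Real.sin t,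
        -(Real.sin ((k : ℝ) * t) / Real.sin t);
        Real.sin ((k : ℝ) * t) / Real.sin t,
        -(Real.sin (((k : ℝ) - 1) * t) / Real.sin t)] := by
  induction k with
  | zero =>
      simp only [pow_zero, Nat.cast_zero]
      ext i j
      fin_cases i <;> fin_cases j <;>
        simp [Matrix.one_apply, zero_sub, neg_mul, Real.sin_neg, one_mul,
          div_self hs, zero_mul, Real.sin_zero, zero_div, neg_div, neg_neg]
  | succ k ih =>
      rw [pow_succ, ih]
      have e1 : ((k : ℝ) + 1) * t + t = ((k : ℝ) + 1 + 1) * t := by ring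
      have e2 : ((k : ℝ) + 1) * t - t = (k : ℝ) * t := by ring
      have e3 : (k : ℝ) * t + t = ((k : ℝ) + 1) * t := by ring
      have e4 : (k : ℝ) * t - t = ((k : ℝ) - 1) * t := by ring
      have r1 := sin_rec l (((k : ℝ) + 1) * t) t hl
      have r2 := sin_rec l ((k : ℝ) * t) t hl
      rw [e1, e2] at r1
      rw [e3, e4] at r2
      ext i j
      fin_cases i <;> fin_cases j <;>
        simp [Umat, Matrix.mul_apply, Fin.sum_univ_two] <;>
        (push_cast; field_simp; linarith [r1, r2, congrArg Real.sin (mul_comm t ((k:ℝ)+1+1)), congrArg Real.sin (mul_comm t ((k:ℝ)+1)), congrArg Real.sin (mul_comm t ((k:ℝ)-1))])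

section UorbitLemmas

variable (p : ℕ) (hp : 3 ≤ p)

lemma sin_pos_aux (hp : 3 ≤ p) {j : ℕ} (h1 : 1 ≤ j) (h2 : j < p) :
    0 < Real.sin ((j : ℝ) * (Real.pi / p)) := by
  have hp0 : (0 : ℝ) < p := by positivity
  apply Real.sin_pos_of_pos_of_lt_pi
  · have : (0:ℝ) < (j:ℝ) := by exact_mod_cast h1
    positivity
  · rw [mul_div_assoc'] at *
    rw [div_lt_iff₀ hp0]
    have : (j : ℝ) < (p : ℝ) := by exact_mod_cast h2
    nlinarith [Real.pi_pos]

lemma Uorbit_eq (hp : 3 ≤ p) (k : ℕ) (hk : 1 ≤ k) :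
    Uorbit (heckeLambda p) k
      = Real.sin ((k : ℝ) * (Real.pi / p)) / Real.sin (((k : ℝ) - 1) * (Real.pi / p)) := by
  have hs : Real.sin (Real.pi / p) ≠ 0 := by
    have := sin_pos_aux p hp (j := 1) le_rfl (by omega)
    simpa using this.ne'
  rw [Uorbit, Umat_pow (heckeLambda p) (Real.pi / p) rfl hs k]
  have hne : Real.sin (((k : ℝ) - 1) * (Real.pi / p)) / Real.sin (Real.pi / p) =
      Real.sin (((k : ℝ) - 1) * (Real.pi / p)) / Real.sin (Real.pi / p) := rfl
  simp only [Matrix.cons_val', Matrix.cons_val_zero, Matrix.cons_val_one, Matrix.head_cons,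
    Matrix.empty_val', Matrix.cons_val_fin_one, Matrix.head_fin_const, Matrix.of_apply]
  rw [neg_div_neg_eq, div_div_div_cancel_right₀ hs]

end UorbitLemmas

/-- For `p ≥ 3`, `λ = 2cos(π/p)` and `U : x ↦ λ - 1/x`, one has
`U^k(0) = sin(kπ/p)/sin((k-1)π/p)` for `2 ≤ k ≤ p`; in particular `U^p(0) = 0`,
`U^2(0) = λ`, and `0 = U^p(0) < U^{p-1}(0) < ⋯ < U^2(0) = λ`. -/
theorem hecke_Uorbit_values (p : ℕ) (hp : 3 ≤ p) :
    (∀ k : ℕ, 2 ≤ k → k ≤ p →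
      Uorbit (heckeLambda p) k
        = Real.sin (k * Real.pi / p) / Real.sin (((k : ℝ) - 1) * Real.pi / p)) ∧
    Uorbit (heckeLambda p) p = 0 ∧
    Uorbit (heckeLambda p) 2 = heckeLambda p ∧
    (∀ k : ℕ, 2 ≤ k → k < p →
      Uorbit (heckeLambda p) (k + 1) < Uorbit (heckeLambda p) k) := by
  have hp0 : (0 : ℝ) < p := by positivity
  have hpi := Real.pi_pos
  set t := Real.pi / p with ht
  have ht0 : 0 < t := by positivity
  have hs1 : 0 < Real.sin t := by
    have := sin_pos_aux p hp (j := 1) le_rfl (by omega); simpa using this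
  have hmain : ∀ k : ℕ, 2 ≤ k → k ≤ p →
      Uorbit (heckeLambda p) k
        = Real.sin (k * Real.pi / p) / Real.sin (((k : ℝ) - 1) * Real.pi / p) := by
    intro k hk2 hkp
    rw [Uorbit_eq p hp k (by omega)]
    rw [mul_div_assoc, mul_div_assoc]
  refine ⟨hmain, ?_, ?_, ?_⟩
  · rw [hmain p (by omega) le_rfl]
    have : (p : ℝ) * Real.pi / p = Real.pi := by field_simp
    rw [this, Real.sin_pi, zero_div]
  · rw [hmain 2 le_rfl (by omega)]
    have h2 : (2 : ℝ) * Real.pi / p = 2 * t := by rw [ht]; ring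
    have h1 : ((2 : ℝ) - 1) * Real.pi / p = t := by rw [ht]; ring
    push_cast
    rw [h2, h1, Real.sin_two_mul, heckeLambda]
    rw [show Real.pi / (p : ℝ) = t from rfl]
    field_simp
  · intro k hk2 hkp
    rw [Uorbit_eq p hp (k + 1) (by omega), Uorbit_eq p hp k (by omega)]
    push_cast
    rw [add_sub_cancel_right]
    have hk0 : 0 < Real.sin ((k : ℝ) * t) := sin_pos_aux p hp (by omega) hkp
    have hkm : 0 < Real.sin (((k : ℝ) - 1) * t) := by
      have : ((k : ℝ) - 1) = ((k - 1 : ℕ) : ℝ) := by push_cast [Nat.cast_sub (by omega : 1 ≤ k)]; ring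
      rw [this]
      exact sin_pos_aux p hp (by omega) (by omega)
    rw [div_lt_div_iff₀ hk0 hkm]
    have hid : Real.sin (((k : ℝ) + 1) * t) * Real.sin (((k : ℝ) - 1) * t)
        = Real.sin ((k : ℝ) * t) ^ 2 - Real.sin t ^ 2 := by
      have e1 : ((k : ℝ) + 1) * t = (k : ℝ) * t + t := by ring
      have e2 : ((k : ℝ) - 1) * t = (k : ℝ) * t - t := by ring
      rw [e1, e2, Real.sin_add, Real.sin_sub]
      have c1 := Real.sin_sq_add_cos_sq ((k : ℝ) * t)
      have c2 := Real.sin_sq_add_cos_sq t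
      nlinarith [c1, c2]
    nlinarith [hid, sq_nonneg (Real.sin ((k:ℝ) * t)), hs1]
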